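/- Let N be a prime, b a positive integer with gcd(N,b)=1, Q an integer with gcd(Q,N)=1, r = gcd(Q,b), and suppose gcd(r, b/r) = 1. Then S(m², Q; Nb) = (1/φ(Nb/r)) Σ_{χ mod Nb/r} χ̄(Q/r) χ(r) R(m²,r) G_χ(m²) G_χ(1), where R(n,r) is the Ramanujan sum and G_χ the Gauss sum modulo Nb/r. -/

import Mathlib

open Real

/-- The Gauss sum `G_χ(n) = Σ_{a mod M} χ(a) e^{2πian/M}`. -/
noncomputable def gaussG (M : ℕ) [NeZero M] (χ : DirichletCharacter ℂ M) (n : ℤ) : ℂ :=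
  ∑ a : ZMod M, χ a * Complex.exp (2 * π * Complex.I * ((a.val : ℂ) * n) / M)

/-- The Kloosterman sum `S(m, n; q) = Σ*_{d mod q} e((md + n d̄)/q)`. -/
noncomputable def kloosterman (q : ℕ) [NeZero q] (m n : ℤ) : ℂ :=
  ∑ d : (ZMod q)ˣ,
    Complex.exp (2 * π * Complex.I *
      ((m : ℂ) * (((d : ZMod q)).val : ℂ) +
        (n : ℂ) * ((((d⁻¹ : (ZMod q)ˣ) : ZMod q)).val : ℂ)) / q)

/-- The Ramanujan sum `R(n, r) = Σ*_{a mod r} e(an/r)`. -/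
noncomputable def ramanujanSum (r : ℕ) [NeZero r] (n : ℤ) : ℂ :=
  ∑ a : (ZMod r)ˣ,
    Complex.exp (2 * π * Complex.I * ((((a : ZMod r)).val : ℂ) * n) / r)

lemma kloosterman_eq (q : ℕ) [NeZero q] (m n : ℤ) :
    kloosterman q m n = ∑ d : (ZMod q)ˣ,
      ZMod.stdAddChar ((m : ZMod q) * (d : ZMod q) + (n : ZMod q) * ((d⁻¹ : (ZMod q)ˣ) : ZMod q)) := by
  unfold kloosterman
  refine Finset.sum_congr rfl fun d _ => ?_
  have h : ((m : ZMod q) * (d : ZMod q) + (n : ZMod q) * ((d⁻¹ : (ZMod q)ˣ) : ZMod q))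
      = (((m * ((d : ZMod q).val : ℤ) + n * (((d⁻¹ : (ZMod q)ˣ) : ZMod q).val : ℤ)) : ℤ) : ZMod q) := by
    push_cast [ZMod.natCast_val, ZMod.cast_id]
    ring
  rw [h, ZMod.stdAddChar_coe]
  push_cast
  ring_nf

lemma ramanujanSum_eq (r : ℕ) [NeZero r] (n : ℤ) :
    ramanujanSum r n = ∑ a : (ZMod r)ˣ, ZMod.stdAddChar ((a : ZMod r) * (n : ZMod r)) := by
  unfold ramanujanSum
  refine Finset.sum_congr rfl fun a _ => ?_
  have h : ((a : ZMod r) * (n : ZMod r)) = ((((a : ZMod r).val : ℤ) * n : ℤ) : ZMod r) := by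
    push_cast [ZMod.natCast_val, ZMod.cast_id]; ring
  rw [h, ZMod.stdAddChar_coe]; push_cast; ring_nf

lemma gaussG_eq (M : ℕ) [NeZero M] (χ : DirichletCharacter ℂ M) (n : ℤ) :
    gaussG M χ n = ∑ a : ZMod M, χ a * ZMod.stdAddChar (a * (n : ZMod M)) := by
  unfold gaussG
  refine Finset.sum_congr rfl fun a _ => ?_
  have h : (a * (n : ZMod M)) = (((a.val : ℤ) * n : ℤ) : ZMod M) := by
    push_cast [ZMod.natCast_val, ZMod.cast_id]; ring
  rw [h, ZMod.stdAddChar_coe]; push_cast; ring_nf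


lemma stdAddChar_split (r M : ℕ) [NeZero r] [NeZero M] (u v : ℤ) (huv : u * M + v * r = 1)
    (k : ℤ) :
    ZMod.stdAddChar ((k : ZMod (r * M))) =
      ZMod.stdAddChar ((u * k : ℤ) : ZMod r) * ZMod.stdAddChar ((v * k : ℤ) : ZMod M) := by
  haveI : NeZero (r * M) := ⟨mul_ne_zero (NeZero.ne r) (NeZero.ne M)⟩
  rw [ZMod.stdAddChar_coe, ZMod.stdAddChar_coe, ZMod.stdAddChar_coe, ← Complex.exp_add]
  congr 1
  have hr : (r : ℂ) ≠ 0 := Nat.cast_ne_zero.mpr (NeZero.ne r)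
  have hM : (M : ℂ) ≠ 0 := Nat.cast_ne_zero.mpr (NeZero.ne M)
  have h1 : (u : ℂ) * M + v * r = 1 := by exact_mod_cast congrArg (fun z : ℤ => (z : ℂ)) huv
  push_cast
  field_simp
  linear_combination (-(k:ℂ)) * h1

lemma stdAddChar_split' (r M : ℕ) [NeZero r] [NeZero M] [NeZero (r * M)] (u v : ℤ)
    (huv : u * M + v * r = 1) (x : ZMod (r * M)) :
    ZMod.stdAddChar x =
      ZMod.stdAddChar ((u : ZMod r) * ZMod.castHom (dvd_mul_right r M) (ZMod r) x) *
      ZMod.stdAddChar ((v : ZMod M) * ZMod.castHom (dvd_mul_left M r) (ZMod M) x) := by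
  have hx : x = ((x.val : ℤ) : ZMod (r * M)) := by
    simp [ZMod.natCast_val, ZMod.cast_id]
  have h2 : ZMod.castHom (dvd_mul_right r M) (ZMod r) x = ((x.val : ℤ) : ZMod r) := by
    conv_lhs => rw [hx]
    exact map_intCast _ _
  have h3 : ZMod.castHom (dvd_mul_left M r) (ZMod M) x = ((x.val : ℤ) : ZMod M) := by
    conv_lhs => rw [hx]
    exact map_intCast _ _
  rw [h2, h3]
  conv_lhs => rw [hx]
  rw [show (u : ZMod r) * ((x.val : ℤ) : ZMod r) = ((u * (x.val : ℤ) : ℤ) : ZMod r) by push_cast; ring]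
  rw [show (v : ZMod M) * ((x.val : ℤ) : ZMod M) = ((v * (x.val : ℤ) : ℤ) : ZMod M) by push_cast; ring]
  exact stdAddChar_split r M u v huv (x.val : ℤ)

lemma kloosterman_mul (r M : ℕ) [NeZero r] [NeZero M] (hco : Nat.Coprime r M)
    (u v : ℤ) (huv : u * M + v * r = 1) (m n : ℤ) :
    kloosterman (r * M) m n =
      (∑ d₁ : (ZMod r)ˣ, ZMod.stdAddChar (((u * m : ℤ) : ZMod r) * (d₁ : ZMod r)
          + ((u * n : ℤ) : ZMod r) * ((d₁⁻¹ : (ZMod r)ˣ) : ZMod r))) *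
      (∑ d₂ : (ZMod M)ˣ, ZMod.stdAddChar (((v * m : ℤ) : ZMod M) * (d₂ : ZMod M)
          + ((v * n : ℤ) : ZMod M) * ((d₂⁻¹ : (ZMod M)ˣ) : ZMod M))) := by
  haveI : NeZero (r * M) := ⟨mul_ne_zero (NeZero.ne r) (NeZero.ne M)⟩
  rw [kloosterman_eq]
  set f₁ : ZMod (r * M) →+* ZMod r := ZMod.castHom (dvd_mul_right r M) (ZMod r) with hf₁
  set f₂ : ZMod (r * M) →+* ZMod M := ZMod.castHom (dvd_mul_left M r) (ZMod M) with hf₂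
  set g : (ZMod (r * M))ˣ → (ZMod r)ˣ × (ZMod M)ˣ :=
    fun d => (Units.map (f₁ : ZMod (r * M) →* ZMod r) d, Units.map (f₂ : ZMod (r * M) →* ZMod M) d)
    with hg
  have hbij : Function.Bijective g := by
    let e : ZMod (r * M) ≃+* ZMod r × ZMod M := ZMod.chineseRemainder hco
    let E : (ZMod (r * M))ˣ ≃* (ZMod r)ˣ × (ZMod M)ˣ :=
      (Units.mapEquiv e.toMulEquiv).trans MulEquiv.prodUnits
    have he : ∀ x, e x = (f₁ x, f₂ x) := by
      intro x
      exact DFunLike.congr_fun (RingHom.ext_zmod (e.toRingHom) (f₁.prod f₂)) x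
    have hgE : g = E := by
      funext d
      refine Prod.ext (Units.ext ?_) (Units.ext ?_)
      · show f₁ ↑d = _
        have h : ((E d).1 : ZMod r) = (e ↑d).1 := rfl
        rw [h, he]
      · show f₂ ↑d = _
        have h : ((E d).2 : ZMod M) = (e ↑d).2 := rfl
        rw [h, he]
    rw [hgE]
    exact E.bijective
  set t₁ : (ZMod r)ˣ → ℂ := fun d₁ => ZMod.stdAddChar (((u * m : ℤ) : ZMod r) * (d₁ : ZMod r)
      + ((u * n : ℤ) : ZMod r) * ((d₁⁻¹ : (ZMod r)ˣ) : ZMod r)) with ht₁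
  set t₂ : (ZMod M)ˣ → ℂ := fun d₂ => ZMod.stdAddChar (((v * m : ℤ) : ZMod M) * (d₂ : ZMod M)
      + ((v * n : ℤ) : ZMod M) * ((d₂⁻¹ : (ZMod M)ˣ) : ZMod M)) with ht₂
  have hsplit : ∀ d : (ZMod (r * M))ˣ,
      ZMod.stdAddChar ((m : ZMod (r*M)) * (d : ZMod (r*M))
        + (n : ZMod (r*M)) * ((d⁻¹ : (ZMod (r*M))ˣ) : ZMod (r*M))) = t₁ (g d).1 * t₂ (g d).2 := by
    intro d
    rw [stdAddChar_split' r M u v huv]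
    have h1 : (u : ZMod r) * f₁ ((m : ZMod (r*M)) * ↑d + (n : ZMod (r*M)) * ↑d⁻¹)
        = ((u * m : ℤ) : ZMod r) * ((g d).1 : ZMod r)
          + ((u * n : ℤ) : ZMod r) * ((((g d).1)⁻¹ : (ZMod r)ˣ) : ZMod r) := by
      have hinv : (((g d).1)⁻¹ : (ZMod r)ˣ) = Units.map (f₁ : ZMod (r*M) →* ZMod r) d⁻¹ := by
        rw [hg]; simp
      rw [hinv]
      show (u : ZMod r) * f₁ ((m : ZMod (r*M)) * ↑d + (n : ZMod (r*M)) * ↑d⁻¹)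
        = ((u * m : ℤ) : ZMod r) * (f₁ ↑d) + ((u * n : ℤ) : ZMod r) * (f₁ ↑(d⁻¹))
      rw [map_add, map_mul, map_mul, map_intCast, map_intCast]
      push_cast
      ring
    have h2 : (v : ZMod M) * f₂ ((m : ZMod (r*M)) * ↑d + (n : ZMod (r*M)) * ↑d⁻¹)
        = ((v * m : ℤ) : ZMod M) * ((g d).2 : ZMod M)
          + ((v * n : ℤ) : ZMod M) * ((((g d).2)⁻¹ : (ZMod M)ˣ) : ZMod M) := by
      have hinv : (((g d).2)⁻¹ : (ZMod M)ˣ) = Units.map (f₂ : ZMod (r*M) →* ZMod M) d⁻¹ := by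
        rw [hg]; simp
      rw [hinv]
      show (v : ZMod M) * f₂ ((m : ZMod (r*M)) * ↑d + (n : ZMod (r*M)) * ↑d⁻¹)
        = ((v * m : ℤ) : ZMod M) * (f₂ ↑d) + ((v * n : ℤ) : ZMod M) * (f₂ ↑(d⁻¹))
      rw [map_add, map_mul, map_mul, map_intCast, map_intCast]
      push_cast
      ring
    rw [h1, h2]
  calc (∑ d : (ZMod (r * M))ˣ, ZMod.stdAddChar ((m : ZMod (r*M)) * (d : ZMod (r*M))
        + (n : ZMod (r*M)) * ((d⁻¹ : (ZMod (r*M))ˣ) : ZMod (r*M))))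
      = ∑ d : (ZMod (r * M))ˣ, t₁ (g d).1 * t₂ (g d).2 := Finset.sum_congr rfl fun d _ => hsplit d
    _ = ∑ p : (ZMod r)ˣ × (ZMod M)ˣ, t₁ p.1 * t₂ p.2 :=
        Fintype.sum_bijective g hbij _ _ fun d => rfl
    _ = (∑ d₁ : (ZMod r)ˣ, t₁ d₁) * (∑ d₂ : (ZMod M)ˣ, t₂ d₂) := by
        rw [Finset.sum_mul_sum]
        exact Fintype.sum_prod_type _

lemma sum_units_of_nonunit_zero {M : ℕ} [NeZero M] (h : ZMod M → ℂ)
    (h0 : ∀ x, ¬IsUnit x → h x = 0) :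
    ∑ x : ZMod M, h x = ∑ a : (ZMod M)ˣ, h ↑a := by
  classical
  have himg : ∑ a : (ZMod M)ˣ, h ↑a
      = ∑ x ∈ Finset.univ.image (fun a : (ZMod M)ˣ => (a : ZMod M)), h x :=
    (Finset.sum_image fun a _ b _ hab => Units.ext hab).symm
  rw [himg]
  refine (Finset.sum_subset (Finset.subset_univ _) fun x _ hx => h0 x fun hu => hx ?_).symm
  rcases hu with ⟨w, rfl⟩
  exact Finset.mem_image.mpr ⟨w, Finset.mem_univ _, rfl⟩

lemma gaussG_units (M : ℕ) [NeZero M] (χ : DirichletCharacter ℂ M) (n : ℤ) :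
    gaussG M χ n = ∑ a : (ZMod M)ˣ, χ ↑a * ZMod.stdAddChar ((a : ZMod M) * (n : ZMod M)) := by
  rw [gaussG_eq]
  exact sum_units_of_nonunit_zero _ fun x hx => by rw [χ.map_nonunit hx, zero_mul]

lemma conj_char (M : ℕ) [NeZero M] (χ : DirichletCharacter ℂ M) (w : (ZMod M)ˣ) :
    (starRingEnd ℂ) (χ ↑w) = χ ↑(w⁻¹) := by
  rw [← RCLike.star_def, MulChar.star_apply', MulChar.inv_apply, Ring.inverse_unit]


open DirichletCharacter in
lemma collapse_sum (M : ℕ) [NeZero M] (T : (ZMod M)ˣ → (ZMod M)ˣ → ℂ) (W : (ZMod M)ˣ) :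
    ∑ χ : DirichletCharacter ℂ M, ∑ a : (ZMod M)ˣ, ∑ c : (ZMod M)ˣ,
        T a c * χ ((W * a * c : (ZMod M)ˣ) : ZMod M)
      = (∑ a : (ZMod M)ˣ, T a ((W * a)⁻¹)) * (M.totient : ℂ) := by
  classical
  rw [Finset.sum_comm]
  have h1 : ∀ a : (ZMod M)ˣ,
      (∑ χ : DirichletCharacter ℂ M, ∑ c : (ZMod M)ˣ,
        T a c * χ ((W * a * c : (ZMod M)ˣ) : ZMod M))
      = T a ((W * a)⁻¹) * (M.totient : ℂ) := by
    intro a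
    rw [Finset.sum_comm]
    have h2 : ∀ c : (ZMod M)ˣ,
        (∑ χ : DirichletCharacter ℂ M, T a c * χ ((W * a * c : (ZMod M)ˣ) : ZMod M))
        = T a c * (if ((W * a * c : (ZMod M)ˣ) : ZMod M) = 1 then (M.totient : ℂ) else 0) := by
      intro c
      rw [← Finset.mul_sum, DirichletCharacter.sum_characters_eq]
    rw [Finset.sum_congr rfl fun c _ => h2 c]
    rw [Finset.sum_eq_single ((W * a)⁻¹)]
    · rw [if_pos]
      rw [mul_inv_cancel, Units.val_one]
    · intro c _ hne
      rw [if_neg, mul_zero]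
      intro hc
      apply hne
      have : W * a * c = 1 := Units.ext hc
      calc c = (W * a)⁻¹ * (W * a * c) := by group
        _ = (W * a)⁻¹ := by rw [this, mul_one]
    · intro h
      exact absurd (Finset.mem_univ _) h
  rw [Finset.sum_congr rfl fun a _ => h1 a, ← Finset.sum_mul]

/-- Lemma C.3: for `N` prime, `gcd(N,b) = 1`, `gcd(Q,N) = 1`, `r = gcd(Q,b)`,
and `gcd(r, b/r) = 1`, we have
`S(m², Q; Nb) = (1/φ(Nb/r)) Σ_{χ mod Nb/r} χ̄(Q/r) χ(r) R(m², r) G_χ(m²) G_χ(1)`. -/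
theorem stmt_12 (N b : ℕ) [NeZero b] (Q m : ℤ) (r M q : ℕ)
    [NeZero r] [NeZero M] [NeZero q]
    (hN : N.Prime) (hNb : Nat.Coprime N b) (hQN : Int.gcd Q N = 1)
    (hr : r = Int.gcd Q b) (hrb : Nat.Coprime r (b / r))
    (hM : M = N * b / r) (hq : q = N * b) :
    kloosterman q (m ^ 2) Q
      = (1 / (M.totient : ℂ)) *
          ∑ χ : DirichletCharacter ℂ M,
            (starRingEnd ℂ) (χ ((Q / (r : ℤ) : ℤ) : ZMod M)) * χ (r : ZMod M) *
              ramanujanSum r (m ^ 2) * gaussG M χ (m ^ 2) * gaussG M χ 1 := by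

  classical
  have hrbdvd : r ∣ b := by
    have h : (r : ℤ) ∣ (b : ℤ) := by rw [hr]; exact Int.gcd_dvd_right _ _
    exact_mod_cast h
  have hrQ : (r : ℤ) ∣ Q := by rw [hr]; exact Int.gcd_dvd_left _ _
  set Q' : ℤ := Q / (r : ℤ) with hQ'def
  have hQfact : Q = (r : ℤ) * Q' := by rw [hQ'def, Int.mul_ediv_cancel' hrQ]
  have hMeq : M = N * (b / r) := by rw [hM, Nat.mul_div_assoc N hrbdvd]
  have hbrr : b = r * (b / r) := (Nat.mul_div_cancel' hrbdvd).symm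
  have hq2 : q = r * M := by
    rw [hq, hMeq]
    calc N * b = N * (r * (b / r)) := by rw [← hbrr]
      _ = r * (N * (b / r)) := by ring
  subst hq2
  have hrN : Nat.Coprime r N := Nat.Coprime.coprime_dvd_left hrbdvd hNb.symm
  have hco : Nat.Coprime r M := by rw [hMeq]; exact Nat.Coprime.mul_right hrN hrb
  have hcoMr : IsCoprime (M : ℤ) (r : ℤ) := by
    rw [Int.isCoprime_iff_gcd_eq_one, Int.gcd_natCast_natCast]
    exact hco.symm
  obtain ⟨u, v, huv⟩ := hcoMr
  -- units mod M
  have hvr : (v : ZMod M) * ((r : ℕ) : ZMod M) = 1 := by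
    have h := congrArg (fun z : ℤ => (z : ZMod M)) huv
    push_cast at h
    rwa [ZMod.natCast_self, mul_zero, zero_add] at h
  have hurU : IsUnit ((r : ℕ) : ZMod M) := IsUnit.of_mul_eq_one _ (by rw [mul_comm]; exact hvr)
  set ur : (ZMod M)ˣ := hurU.unit with hurdef
  have hur : (ur : ZMod M) = ((r : ℕ) : ZMod M) := hurU.unit_spec
  have hvinv : (v : ZMod M) = ((ur⁻¹ : (ZMod M)ˣ) : ZMod M) := by
    calc (v : ZMod M) = (v : ZMod M) * ((ur : ZMod M) * ((ur⁻¹ : (ZMod M)ˣ) : ZMod M)) := by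
          rw [Units.mul_inv, mul_one]
      _ = ((v : ZMod M) * (ur : ZMod M)) * ((ur⁻¹ : (ZMod M)ˣ) : ZMod M) := by ring
      _ = ((ur⁻¹ : (ZMod M)ˣ) : ZMod M) := by rw [hur, hvr, one_mul]
  -- coprimality of Q' with M
  have hQ'N : IsCoprime Q' (N : ℤ) := by
    have hQNco : IsCoprime Q (N : ℤ) := Int.isCoprime_iff_gcd_eq_one.mpr hQN
    exact hQNco.of_isCoprime_of_dvd_left ⟨r, by rw [hQfact]; ring⟩
  have hQ'br : IsCoprime Q' ((b / r : ℕ) : ℤ) := by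
    rw [Int.isCoprime_iff_gcd_eq_one]
    set d := Int.gcd Q' ((b / r : ℕ) : ℤ) with hd
    have h1 : (d : ℤ) ∣ Q' := Int.gcd_dvd_left _ _
    have h2 : (d : ℤ) ∣ ((b / r : ℕ) : ℤ) := Int.gcd_dvd_right _ _
    have hdQ : ((d * r : ℕ) : ℤ) ∣ Q := by
      push_cast
      rw [hQfact, mul_comm (r : ℤ) Q']
      exact mul_dvd_mul h1 dvd_rfl
    have hdb : ((d * r : ℕ) : ℤ) ∣ (b : ℤ) := by
      push_cast
      have hb' : (b : ℤ) = ((b / r : ℕ) : ℤ) * (r : ℤ) := by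
        exact_mod_cast congrArg (Nat.cast (R := ℤ)) (by rw [mul_comm] at hbrr; exact hbrr)
      rw [hb']
      exact mul_dvd_mul h2 dvd_rfl
    have hgcd : ((d * r : ℕ) : ℤ) ∣ ((Int.gcd Q b : ℕ) : ℤ) := Int.dvd_coe_gcd hdQ hdb
    rw [← hr] at hgcd
    have hnat : d * r ∣ r := by exact_mod_cast hgcd
    have hd1 : d ∣ 1 :=
      (Nat.mul_dvd_mul_iff_right (Nat.pos_of_ne_zero (NeZero.ne r))).mp
        (by rw [one_mul]; exact hnat)
    exact Nat.dvd_one.mp hd1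
  have hQ'M : IsCoprime Q' ((M : ℕ) : ℤ) := by
    have hM' : ((M : ℕ) : ℤ) = (N : ℤ) * ((b / r : ℕ) : ℤ) := by
      exact_mod_cast congrArg (Nat.cast (R := ℤ)) hMeq
    rw [hM']
    exact hQ'N.mul_right hQ'br
  obtain ⟨x, y, hxy⟩ := hQ'M
  have huqU : IsUnit ((Q' : ℤ) : ZMod M) := by
    have h := congrArg (fun z : ℤ => (z : ZMod M)) hxy
    push_cast at h
    rw [ZMod.natCast_self, mul_zero, add_zero] at h
    exact IsUnit.of_mul_eq_one _ (by rw [mul_comm]; exact h)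
  set uq : (ZMod M)ˣ := huqU.unit with huqdef
  have huq : (uq : ZMod M) = ((Q' : ℤ) : ZMod M) := huqU.unit_spec
  -- the common core value
  set CORE : ℂ := ramanujanSum r (m ^ 2) *
      ∑ a : (ZMod M)ˣ, ZMod.stdAddChar (((m ^ 2 : ℤ) : ZMod M) * (a : ZMod M)) *
        ZMod.stdAddChar ((uq : ZMod M) * ((ur⁻¹ : (ZMod M)ˣ) : ZMod M) *
          ((a⁻¹ : (ZMod M)ˣ) : ZMod M)) with hCORE
  -- LHS = CORE
  have hL : kloosterman (r * M) (m ^ 2) Q = CORE := by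
    rw [kloosterman_mul r M hco u v huv (m ^ 2) Q, hCORE]
    congr 1
    · -- Ramanujan factor
      have hQ0 : ((u * Q : ℤ) : ZMod r) = 0 := by
        rw [ZMod.intCast_zmod_eq_zero_iff_dvd]
        exact Dvd.dvd.mul_left hrQ u
      have huM : (u : ZMod r) * ((M : ℕ) : ZMod r) = 1 := by
        have h := congrArg (fun z : ℤ => (z : ZMod r)) huv
        push_cast at h
        rwa [ZMod.natCast_self, mul_zero, add_zero] at h
      have huU : IsUnit ((u : ℤ) : ZMod r) := IsUnit.of_mul_eq_one _ huM
      set wu : (ZMod r)ˣ := huU.unit with hwudef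
      have hwu : (wu : ZMod r) = ((u : ℤ) : ZMod r) := huU.unit_spec
      rw [ramanujanSum_eq]
      refine Fintype.sum_bijective (fun d => wu * d) (Group.mulLeft_bijective wu) _ _ fun d => ?_
      rw [hQ0, zero_mul, add_zero]
      congr 1
      rw [Units.val_mul, hwu]
      push_cast
      ring
    · -- the modulus-M factor
      refine Fintype.sum_bijective (fun d => ur⁻¹ * d) (Group.mulLeft_bijective ur⁻¹) _ _ fun d => ?_
      have hvQ : ((v * Q : ℤ) : ZMod M) = (uq : ZMod M) := by
        have h1 : ((v * Q : ℤ) : ZMod M) = (v : ZMod M) * (((r : ℤ) * Q' : ℤ) : ZMod M) := by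
          rw [← hQfact]; push_cast; ring
        rw [h1]
        push_cast
        rw [← mul_assoc, hvr, one_mul, huq]
      rw [AddChar.map_add_eq_mul]
      congr 1
      · congr 1
        rw [Units.val_mul]
        push_cast
        rw [hvinv]
        ring
      · congr 1
        have hcoe : (uq : ZMod M) * ((ur⁻¹ : (ZMod M)ˣ) : ZMod M) *
              (((ur⁻¹ * d)⁻¹ : (ZMod M)ˣ) : ZMod M)
            = ((uq * ur⁻¹ * (ur⁻¹ * d)⁻¹ : (ZMod M)ˣ) : ZMod M) := by
          rw [Units.val_mul, Units.val_mul]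
        have hunit : uq * ur⁻¹ * (ur⁻¹ * d)⁻¹ = uq * d⁻¹ := by
          rw [mul_inv_rev, inv_inv]
          calc uq * ur⁻¹ * (d⁻¹ * ur) = uq * d⁻¹ * (ur⁻¹ * ur) := by
                rw [mul_assoc, mul_assoc]
                congr 1
                rw [← mul_assoc, ← mul_assoc, mul_comm (ur⁻¹ : (ZMod M)ˣ) (d⁻¹ : (ZMod M)ˣ)]
            _ = uq * d⁻¹ := by rw [inv_mul_cancel, mul_one]
        rw [hcoe, hunit, Units.val_mul, hvQ]
  rw [hL]
  -- RHS = CORE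
  have hφ : ((M.totient : ℂ)) ≠ 0 :=
    Nat.cast_ne_zero.mpr (Nat.totient_pos.mpr (Nat.pos_of_ne_zero (NeZero.ne M))).ne'
  have hsummand : ∀ χ : DirichletCharacter ℂ M,
      (starRingEnd ℂ) (χ ((Q' : ℤ) : ZMod M)) * χ ((r : ℕ) : ZMod M) *
          ramanujanSum r (m ^ 2) * gaussG M χ (m ^ 2) * gaussG M χ 1
        = ∑ a : (ZMod M)ˣ, ∑ c : (ZMod M)ˣ,
            (ramanujanSum r (m ^ 2) *
              ZMod.stdAddChar ((a : ZMod M) * ((m ^ 2 : ℤ) : ZMod M)) *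
              ZMod.stdAddChar ((c : ZMod M) * ((1 : ℤ) : ZMod M))) *
              χ ((uq⁻¹ * ur * a * c : (ZMod M)ˣ) : ZMod M) := by
    intro χ
    rw [gaussG_units, gaussG_units, ← huq, ← hur, conj_char]
    simp only [Finset.mul_sum, Finset.sum_mul]
    rw [Finset.sum_comm]
    refine Finset.sum_congr rfl fun a _ => Finset.sum_congr rfl fun c _ => ?_
    have hx : χ ((uq⁻¹ * ur * a * c : (ZMod M)ˣ) : ZMod M)
        = χ ((uq⁻¹ : (ZMod M)ˣ) : ZMod M) * χ ((ur : (ZMod M)ˣ) : ZMod M) *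
            χ ((a : (ZMod M)ˣ) : ZMod M) * χ ((c : (ZMod M)ˣ) : ZMod M) := by
      rw [Units.val_mul, Units.val_mul, Units.val_mul, map_mul χ, map_mul χ, map_mul χ]
    rw [hx]
    ring
  rw [Finset.sum_congr rfl fun χ _ => hsummand χ]
  rw [collapse_sum M _ (uq⁻¹ * ur)]
  rw [hCORE]
  have hfinal : ∀ a : (ZMod M)ˣ,
      (ramanujanSum r (m ^ 2) *
        ZMod.stdAddChar ((a : ZMod M) * ((m ^ 2 : ℤ) : ZMod M)) *
        ZMod.stdAddChar ((((uq⁻¹ * ur * a)⁻¹ : (ZMod M)ˣ) : ZMod M) * ((1 : ℤ) : ZMod M)))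
      = ramanujanSum r (m ^ 2) *
          (ZMod.stdAddChar (((m ^ 2 : ℤ) : ZMod M) * (a : ZMod M)) *
            ZMod.stdAddChar ((uq : ZMod M) * ((ur⁻¹ : (ZMod M)ˣ) : ZMod M) *
              ((a⁻¹ : (ZMod M)ˣ) : ZMod M))) := by
    intro a
    have hinv : (uq⁻¹ * ur * a)⁻¹ = uq * ur⁻¹ * a⁻¹ := by
      rw [mul_inv_rev, mul_inv_rev, inv_inv]
      rw [mul_comm (a⁻¹ : (ZMod M)ˣ) (ur⁻¹ * uq), mul_comm (ur⁻¹ : (ZMod M)ˣ) uq]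
    rw [hinv, Int.cast_one, mul_one, Units.val_mul, Units.val_mul, mul_comm ((a : ZMod M)) _, mul_assoc]
  rw [Finset.sum_congr rfl fun a _ => hfinal a, ← Finset.mul_sum]
  field_simp
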